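/- Let ν be a finite signed or complex Radon measure on K × B_{E*} with ‖T*ν‖ = ‖ν‖, let σ be the pushforward of |ν| under the first projection, and let h : K → B_{E*} be a weak* density of ν. Then ‖h(t)‖ = 1 for σ-almost every t ∈ K; more precisely, the set { t ∈ K : ‖h(t)‖ < 1 } has σ-outer measure zero. -/

import Mathlib

open MeasureTheory
open scoped ENNReal

noncomputable section

/-- The closed unit ball of the dual of `E`, equipped with the weak* topology. -/
abbrev DualBall (𝕜 E : Type*) [RCLike 𝕜] [NormedAddCommGroup E] [NormedSpace 𝕜 E] :=
  {φ : WeakDual 𝕜 E // ‖WeakDual.toStrongDual φ‖ ≤ 1}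

/-- The Borel σ-algebra on `K × B_{E*}`. -/
instance (priority := 1100) prodBallBorelMeasurableSpace (K : Type*) [TopologicalSpace K]
    (𝕜 E : Type*) [RCLike 𝕜] [NormedAddCommGroup E] [NormedSpace 𝕜 E] :
    MeasurableSpace (K × DualBall 𝕜 E) := borel _

instance (K : Type*) [TopologicalSpace K]
    (𝕜 E : Type*) [RCLike 𝕜] [NormedAddCommGroup E] [NormedSpace 𝕜 E] :
    BorelSpace (K × DualBall 𝕜 E) := ⟨rfl⟩

/-- If a finite signed/complex Radon measure `ν` on `K × B_{E*}` (represented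
by its total variation `τ` and a modulus-one Borel density `ρ`) satisfies `‖T*ν‖ = ‖ν‖`, and
`h : K → B_{E*}` is a weak* density of `ν` with respect to `σ = π₁(|ν|)`, then `‖h(t)‖ = 1`
σ-almost everywhere: the set `{t : ‖h(t)‖ < 1}` has σ-outer measure zero. -/
theorem weakstar_density_norm_one_ae
    (K : Type*) [TopologicalSpace K] [CompactSpace K] [T2Space K]
    [MeasurableSpace K] [BorelSpace K]
    (𝕜 E : Type*) [RCLike 𝕜] [NormedAddCommGroup E] [NormedSpace 𝕜 E] [CompleteSpace E]
    (τ : Measure (K × DualBall 𝕜 E)) [IsFiniteMeasure τ] [τ.Regular]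
    (ρ : K × DualBall 𝕜 E → 𝕜) (hρmeas : Measurable ρ) (hρone : ∀ p, ‖ρ p‖ = 1)
    (σ : Measure K) (hσ : σ = τ.map Prod.fst)
    (hnorm : sSup {r : ℝ | ∃ f : C(K, E), ‖f‖ ≤ 1 ∧
        r = ‖∫ p, (p.2.1 (f p.1)) * ρ p ∂τ‖} = (τ Set.univ).toReal)
    (h : K → DualBall 𝕜 E)
    (hdens : ∀ f : C(K, E), ∫ p, (p.2.1 (f p.1)) * ρ p ∂τ = ∫ t, (h t).1 (f t) ∂σ) :
    σ {t : K | ‖WeakDual.toStrongDual (h t).1‖ < 1} = 0 := by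
  classical
  have hfstmeas : Measurable (Prod.fst : K × DualBall 𝕜 E → K) :=
    continuous_fst.measurable
  have hσuniv : σ Set.univ = τ Set.univ := by
    rw [hσ, Measure.map_apply hfstmeas MeasurableSet.univ, Set.preimage_univ]
  set M := (τ Set.univ).toReal with hM
  have hσfin : σ Set.univ < ⊤ := hσuniv ▸ measure_lt_top τ _
  have hSne : Set.Nonempty {r : ℝ | ∃ f : C(K, E), ‖f‖ ≤ 1 ∧
      r = ‖∫ p, (p.2.1 (f p.1)) * ρ p ∂τ‖} := by
    refine ⟨0, 0, by simp, ?_⟩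
    simp
  have key : ∀ ε : ℝ, 0 < ε → ε ≤ 1 →
      σ {t : K | ‖WeakDual.toStrongDual (h t).1‖ ≤ 1 - ε} = 0 := by
    intro ε hε hε1
    by_contra hc
    set A := {t : K | ‖WeakDual.toStrongDual (h t).1‖ ≤ 1 - ε} with hA
    have hcfin : σ A < ⊤ := lt_of_le_of_lt (measure_mono (Set.subset_univ _)) hσfin
    set c := (σ A).toReal with hcdef
    have hc' : 0 < c := ENNReal.toReal_pos hc hcfin.ne
    have hcM : c ≤ M := by
      rw [hcdef, hM, ← hσuniv]
      exact ENNReal.toReal_mono hσfin.ne (measure_mono (Set.subset_univ _))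
    have hub : ∀ r ∈ {r : ℝ | ∃ f : C(K, E), ‖f‖ ≤ 1 ∧
        r = ‖∫ p, (p.2.1 (f p.1)) * ρ p ∂τ‖}, r ≤ M - ε * c := by
      rintro r ⟨f, hf1, rfl⟩
      rw [hdens f]
      set g : K → 𝕜 := fun t => (h t).1 (f t) with hg
      have hεcM : ε * c ≤ M := by nlinarith
      have hgle : ∀ t, ‖g t‖ ≤ 1 := by
        intro t
        calc ‖g t‖ ≤ ‖WeakDual.toStrongDual (h t).1‖ * ‖f t‖ :=
              ContinuousLinearMap.le_opNorm _ _
          _ ≤ 1 * 1 := mul_le_mul (h t).2 (le_trans (f.norm_coe_le_norm t) hf1)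
              (norm_nonneg _) zero_le_one
          _ = 1 := one_mul 1
      have hgleA : ∀ t ∈ A, ‖g t‖ ≤ 1 - ε := by
        intro t ht
        calc ‖g t‖ ≤ ‖WeakDual.toStrongDual (h t).1‖ * ‖f t‖ :=
              ContinuousLinearMap.le_opNorm _ _
          _ ≤ (1 - ε) * 1 := mul_le_mul ht (le_trans (f.norm_coe_le_norm t) hf1)
              (norm_nonneg _) (by linarith)
          _ = 1 - ε := mul_one _
      by_cases hint : Integrable g σ
      · have hφm : AEStronglyMeasurable (fun t => ‖g t‖) σ := hint.aestronglyMeasurable.norm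
        set ψ := hφm.mk _ with hψdef
        have hψm : StronglyMeasurable ψ := hφm.stronglyMeasurable_mk
        have hae : (fun t => ‖g t‖) =ᵐ[σ] ψ := hφm.ae_eq_mk
        set B := {t : K | ψ t ≤ 1 - ε} with hB
        have hBmeas : MeasurableSet B := hψm.measurable measurableSet_Iic
        have hN : σ {t : K | ¬ ‖g t‖ = ψ t} = 0 := ae_iff.mp hae
        have hAB : σ A ≤ σ B := by
          have h1 : A ⊆ (A \ {t : K | ¬ ‖g t‖ = ψ t}) ∪ {t : K | ¬ ‖g t‖ = ψ t} := by
            intro t ht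
            by_cases h2 : ‖g t‖ = ψ t
            · exact Or.inl ⟨ht, by simp [h2]⟩
            · exact Or.inr h2
          have h2 : A \ {t : K | ¬ ‖g t‖ = ψ t} ⊆ B := by
            rintro t ⟨ht, hteq⟩
            have hteq' : ‖g t‖ = ψ t := by simpa using hteq
            show ψ t ≤ 1 - ε
            rw [← hteq']
            exact hgleA t ht
          calc σ A ≤ σ ((A \ {t : K | ¬ ‖g t‖ = ψ t}) ∪ {t : K | ¬ ‖g t‖ = ψ t}) :=
                measure_mono h1
            _ ≤ σ (A \ {t : K | ¬ ‖g t‖ = ψ t}) + σ {t : K | ¬ ‖g t‖ = ψ t} :=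
                measure_union_le _ _
            _ = σ (A \ {t : K | ¬ ‖g t‖ = ψ t}) := by rw [hN, add_zero]
            _ ≤ σ B := measure_mono h2
        have hBfin : σ B < ⊤ := lt_of_le_of_lt (measure_mono (Set.subset_univ _)) hσfin
        have hBcfin : σ Bᶜ < ⊤ := lt_of_le_of_lt (measure_mono (Set.subset_univ _)) hσfin
        have hcB : c ≤ (σ B).toReal := ENNReal.toReal_mono hBfin.ne hAB
        have hψint : Integrable ψ σ := hint.norm.congr hae
        have hsplit : ∫ t, ψ t ∂σ = (∫ t in B, ψ t ∂σ) + ∫ t in Bᶜ, ψ t ∂σ :=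
          (integral_add_compl hBmeas hψint).symm
        have hb1 : ∫ t in B, ψ t ∂σ ≤ (1 - ε) * (σ B).toReal := by
          have h3 : ∫ t in B, ψ t ∂σ ≤ ∫ _ in B, (1 - ε) ∂σ := by
            refine setIntegral_mono_on hψint.integrableOn
              (integrableOn_const hBfin.ne) hBmeas ?_
            intro t ht
            exact ht
          simpa [setIntegral_const, smul_eq_mul, mul_comm, measureReal_def] using h3
        have hb2 : ∫ t in Bᶜ, ψ t ∂σ ≤ (σ Bᶜ).toReal := by
          have hψ1 : ψ ≤ᵐ[σ] fun _ => (1 : ℝ) := by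
            filter_upwards [hae] with t ht
            rw [← ht]
            exact hgle t
          have h3 : ∫ t in Bᶜ, ψ t ∂σ ≤ ∫ _ in Bᶜ, (1 : ℝ) ∂σ :=
            integral_mono_ae hψint.integrableOn
              (integrableOn_const hBcfin.ne) (ae_restrict_of_ae hψ1)
          simpa [setIntegral_const, smul_eq_mul, measureReal_def] using h3
        have htotal : (σ B).toReal + (σ Bᶜ).toReal = M := by
          rw [hM, ← hσuniv, ← measure_add_measure_compl hBmeas,
            ENNReal.toReal_add hBfin.ne hBcfin.ne]
        calc ‖∫ t, g t ∂σ‖ ≤ ∫ t, ‖g t‖ ∂σ := norm_integral_le_integral_norm g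
          _ = ∫ t, ψ t ∂σ := integral_congr_ae hae
          _ ≤ (1 - ε) * (σ B).toReal + (σ Bᶜ).toReal := by rw [hsplit]; linarith
          _ = M - ε * (σ B).toReal := by nlinarith
          _ ≤ M - ε * c := by nlinarith
      · rw [integral_undef hint, norm_zero]
        linarith
    have hle := csSup_le hSne hub
    rw [hnorm] at hle
    nlinarith [mul_pos hε hc']
  have hsub : {t : K | ‖WeakDual.toStrongDual (h t).1‖ < 1} ⊆
      ⋃ n : ℕ, {t : K | ‖WeakDual.toStrongDual (h t).1‖ ≤ 1 - 1 / (n + 1)} := by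
    intro t ht
    have ht' : (0 : ℝ) < 1 - ‖WeakDual.toStrongDual (h t).1‖ := by
      simpa [sub_pos] using ht
    obtain ⟨n, hn⟩ := exists_nat_one_div_lt ht'
    exact Set.mem_iUnion.mpr ⟨n, by simp only [Set.mem_setOf_eq]; linarith⟩
  refine le_antisymm ?_ (zero_le)
  calc σ {t : K | ‖WeakDual.toStrongDual (h t).1‖ < 1}
      ≤ σ (⋃ n : ℕ, {t : K | ‖WeakDual.toStrongDual (h t).1‖ ≤ 1 - 1 / (n + 1)}) :=
        measure_mono hsub
    _ ≤ ∑' n : ℕ, σ {t : K | ‖WeakDual.toStrongDual (h t).1‖ ≤ 1 - 1 / (n + 1)} :=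
        measure_iUnion_le _
    _ = 0 := by
        have : ∀ n : ℕ, σ {t : K | ‖WeakDual.toStrongDual (h t).1‖ ≤ 1 - 1 / (n + 1)} = 0 := by
          intro n
          refine key (1 / (n + 1)) (by positivity) ?_
          rw [div_le_one (by positivity)]
          have := Nat.cast_nonneg (α := ℝ) n
          linarith
        rw [tsum_congr this, tsum_zero]
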